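/- arXiv:1702.06190 — 3 statements merged into one kernel-verified Lean document; each statement's English description precedes it below -/
import Mathlib

section
/- Let m ∈ ℕ, F ∈ C(m) and n ∈ ℕ with n ≥ 1. Then K_n^ε(F) converges to K_n(F) in the Hausdorff metric as ε → 0⁺: for every δ > 0 there exists ε₀ > 0 such that d_H(K_n^ε(F), K_n(F)) < δ for all ε ∈ (0, ε₀]. -/
open Metric Set Pointwise

noncomputable section

abbrev E (m : ℕ) := EuclideanSpace ℝ (Fin m)

def cube (m : ℕ) : Set (E m) := {x | ∀ i, x i ∈ Set.Icc (0:ℝ) 1}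

def intVec {m : ℕ} (t : Fin m → ℤ) : E m := WithLp.toLp 2 (fun i => (t i : ℝ))

def IsLift {m : ℕ} (F : E m → E m) : Prop :=
  Continuous F ∧ ∀ (x : E m) (t : Fin m → ℤ), F (x + intVec t) = F x + intVec t

def IsHomeoLift {m : ℕ} (F : E m → E m) : Prop :=
  IsLift F ∧ ∃ h : (E m) ≃ₜ (E m), ⇑h = F

def Kset {m : ℕ} (F : E m → E m) (k : ℕ) : Set (E m) :=
  {v | ∃ x ∈ cube m, v = (k : ℝ)⁻¹ • (F^[k] x - x)}

def rotSet {m : ℕ} (F : E m → E m) : Set (E m) :=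
  ⋂ n ≥ 1, closure (⋃ k ≥ n, Kset F k)

def IsPseudoOrbit {m : ℕ} (F : E m → E m) (ε : ℝ) (n : ℕ) (ξ : ℕ → E m) : Prop :=
  ∀ j < n, ‖F (ξ j) - ξ (j + 1)‖ ≤ ε

def KsetEps {m : ℕ} (F : E m → E m) (ε : ℝ) (k : ℕ) : Set (E m) :=
  {v | ∃ ξ : ℕ → E m, IsPseudoOrbit F ε k ξ ∧ ξ 0 ∈ cube m ∧ v = (k : ℝ)⁻¹ • (ξ k - ξ 0)}

def rotSetEps {m : ℕ} (F : E m → E m) (ε : ℝ) : Set (E m) :=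
  ⋂ n ≥ 1, closure (⋃ k ≥ n, KsetEps F ε k)

lemma isCompact_cube (m : ℕ) : IsCompact (cube m) := by
  have h : cube m = WithLp.toLp 2 '' Set.pi Set.univ (fun _ : Fin m => Set.Icc (0:ℝ) 1) := by
    ext x; constructor
    · intro hx; exact ⟨WithLp.ofLp x, Set.mem_univ_pi.2 hx, rfl⟩
    · rintro ⟨y, hy, rfl⟩; exact Set.mem_univ_pi.1 hy
  rw [h]
  exact (isCompact_univ_pi (fun _ => isCompact_Icc)).image (by apply PiLp.continuous_toLp)

/-- `K_n^ε(F)` converges to `K_n(F)` in the Hausdorff metric as ε → 0⁺. -/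
theorem KsetEps_tendsto_Kset {m : ℕ} {F : E m → E m} (hF : IsLift F)
    {n : ℕ} (hn : 1 ≤ n) :
    ∀ δ > (0 : ℝ), ∃ ε₀ > (0 : ℝ), ∀ ε : ℝ, 0 < ε → ε ≤ ε₀ →
      Metric.hausdorffDist (KsetEps F ε n) (Kset F n) < δ := by
  intro δ hδ
  obtain ⟨hFc, -⟩ := hF
  have hnR : (0:ℝ) < n := by exact_mod_cast hn
  set b : ℝ := n * δ / 2 with hbdef
  have hb : 0 < b := by positivity
  set K : Set (E m) := ⋃ j ∈ Finset.range (n+1), F^[j] '' cube m with hKdef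
  have hKc : IsCompact K := (Finset.range (n+1)).isCompact_biUnion
    (fun j _ => (isCompact_cube m).image (hFc.iterate j))
  set S := Metric.cthickening b K with hSdef
  have hSc : IsCompact S := hKc.cthickening
  have hUC : UniformContinuousOn F S :=
    hSc.uniformContinuousOn_of_continuous hFc.continuousOn
  have hmod : ∀ ε : ℝ, ∃ w : ℝ, 0 < w ∧ (0 < ε → (w ≤ ε ∧
      ∀ x ∈ S, ∀ y ∈ S, dist x y ≤ w → dist (F x) (F y) ≤ ε)) := by
    intro ε
    rcases le_or_gt ε 0 with hε | hε
    · exact ⟨1, one_pos, fun h => absurd h (not_lt.2 hε)⟩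
    · obtain ⟨d', hd', H⟩ := (Metric.uniformContinuousOn_iff.1 hUC) ε hε
      refine ⟨min (d'/2) ε, by positivity, fun _ => ⟨min_le_right _ _,
        fun x hx y hy h => le_of_lt (H x hx y hy ?_)⟩⟩
      calc dist x y ≤ min (d'/2) ε := h
        _ ≤ d'/2 := min_le_left _ _
        _ < d' := by linarith
  choose w hw0 hw using hmod
  -- the decreasing sequence of moduli
  set e : ℕ → ℝ := fun k => Nat.rec b (fun _ prev => w (prev / 2)) k with hedef
  have he0 : ∀ k, 0 < e k := by
    intro k; induction k with
    | zero => exact hb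
    | succ k ih => exact hw0 _
  have hesucc : ∀ k, e (k+1) = w (e k / 2) := fun k => rfl
  have hhalf : ∀ k, e (k+1) ≤ e k / 2 := by
    intro k
    rw [hesucc]
    exact (hw _ (by have := he0 k; positivity)).1
  have heUC : ∀ k, ∀ x ∈ S, ∀ y ∈ S, dist x y ≤ e (k+1) → dist (F x) (F y) ≤ e k / 2 := by
    intro k x hx y hy h
    exact (hw _ (by have := he0 k; positivity)).2 x hx y hy (by rwa [← hesucc])
  have hanti : Antitone e := antitone_nat_of_succ_le
    (fun k => (hhalf k).trans (by have := he0 k; linarith))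
  have heb : ∀ k, e k ≤ b := fun k => hanti (Nat.zero_le k)
  refine ⟨e n, he0 n, ?_⟩
  intro ε hε hεe
  -- main estimate along a pseudo-orbit
  have main : ∀ v ∈ KsetEps F ε n, ∃ y ∈ Kset F n, dist v y ≤ δ / 2 := by
    rintro v ⟨ξ, hpo, hξ0, rfl⟩
    have key : ∀ j, j ≤ n → dist (ξ j) (F^[j] (ξ 0)) ≤ e (n - j) := by
      intro j
      induction j with
      | zero => intro _; simpa using (he0 n).le
      | succ j ih =>
        intro hj
        have hj' : j ≤ n := Nat.le_of_succ_le hj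
        have hjlt : j < n := hj
        have ihj := ih hj'
        have hnsub : n - j = (n - (j+1)) + 1 := by omega
        have hFK : F^[j] (ξ 0) ∈ K := by
          rw [hKdef]
          exact Set.mem_biUnion (Finset.mem_range.2 (by omega)) ⟨ξ 0, hξ0, rfl⟩
        have hFS : F^[j] (ξ 0) ∈ S := self_subset_cthickening _ hFK
        have hξS : ξ j ∈ S :=
          mem_cthickening_of_dist_le _ _ _ _ hFK (ihj.trans (heb _))
        have h2 : dist (F (ξ j)) (F (F^[j] (ξ 0))) ≤ e (n - (j+1)) / 2 := by
          apply heUC (n - (j+1)) _ hξS _ hFS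
          rw [← hnsub]; exact ihj
        have h1 : dist (ξ (j+1)) (F (ξ j)) ≤ ε := by
          rw [dist_comm, dist_eq_norm]; exact hpo j hjlt
        have hεsmall : ε ≤ e (n - (j+1)) / 2 := by
          refine hεe.trans ?_
          calc e n ≤ e ((n - (j+1)) + 1) := hanti (show (n - (j+1)) + 1 ≤ n by omega)
            _ ≤ e (n - (j+1)) / 2 := hhalf _
        calc dist (ξ (j+1)) (F^[j+1] (ξ 0))
            ≤ dist (ξ (j+1)) (F (ξ j)) + dist (F (ξ j)) (F^[j+1] (ξ 0)) := dist_triangle _ _ _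
          _ = dist (ξ (j+1)) (F (ξ j)) + dist (F (ξ j)) (F (F^[j] (ξ 0))) := by
              rw [Function.iterate_succ_apply']
          _ ≤ e (n - (j+1)) / 2 + e (n - (j+1)) / 2 := add_le_add (h1.trans hεsmall) h2
          _ = e (n - (j+1)) := by ring
    refine ⟨(n : ℝ)⁻¹ • (F^[n] (ξ 0) - ξ 0), ⟨ξ 0, hξ0, rfl⟩, ?_⟩
    have := key n le_rfl
    rw [Nat.sub_self] at this
    have hdist : dist ((n:ℝ)⁻¹ • (ξ n - ξ 0)) ((n:ℝ)⁻¹ • (F^[n] (ξ 0) - ξ 0))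
        = (n:ℝ)⁻¹ * dist (ξ n) (F^[n] (ξ 0)) := by
      rw [dist_smul₀, dist_sub_right, Real.norm_eq_abs, abs_of_nonneg (by positivity)]
    rw [hdist]
    calc (n:ℝ)⁻¹ * dist (ξ n) (F^[n] (ξ 0)) ≤ (n:ℝ)⁻¹ * b := by
          apply mul_le_mul_of_nonneg_left this (by positivity)
      _ = δ / 2 := by rw [hbdef]; field_simp
  -- reverse inclusion
  have hsub : Kset F n ⊆ KsetEps F ε n := by
    rintro v ⟨x, hx, rfl⟩
    refine ⟨fun j => F^[j] x, ?_, by simpa using hx, by simp⟩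
    intro j _
    show ‖F (F^[j] x) - F^[j+1] x‖ ≤ ε
    rw [Function.iterate_succ_apply']
    simp [hε.le]
  have hle : Metric.hausdorffDist (KsetEps F ε n) (Kset F n) ≤ δ / 2 := by
    refine Metric.hausdorffDist_le_of_mem_dist (half_pos hδ).le main ?_
    intro y hy
    exact ⟨y, hsub hy, by rw [dist_self]; positivity⟩
  linarith
end
end

section
/- Let f : 𝕋² → 𝕋² be a homeomorphism of the two-torus homotopic to the identity with lift F ∈ H(2), and let δ, γ ∈ (0, 1/2) be such that d(x,y) < δ implies d(f(x), f(y)) < 1/2 − γ for all x, y ∈ 𝕋². Assume f has the δ-shadowing property with constant ε for some ε ∈ (0, γ). Then the ε-rotation set equals the rotation set: ρ_ε(F) = ρ(F). -/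
open Metric Set Pointwise

noncomputable section

def lattice2 : AddSubgroup (E 2) :=
  AddSubgroup.closure (Set.range fun t : Fin 2 → ℤ => intVec t)

abbrev Torus2 := E 2 ⧸ lattice2

def pr : E 2 → Torus2 := QuotientAddGroup.mk

/-! ### Auxiliary lemmas -/

def intVecHom : (Fin 2 → ℤ) →+ E 2 where
  toFun := intVec
  map_zero' := by ext i; simp [intVec]
  map_add' t s := by ext i; simp [intVec]

lemma mem_lattice2 {x : E 2} : x ∈ lattice2 ↔ ∃ t : Fin 2 → ℤ, intVec t = x := by
  have h : lattice2 = intVecHom.range := by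
    rw [lattice2, ← AddSubgroup.closure_eq intVecHom.range]; rfl
  rw [h]; exact AddMonoidHom.mem_range

lemma abs_coord_le_norm (x : E 2) (i : Fin 2) : |x i| ≤ ‖x‖ := by
  rw [EuclideanSpace.norm_eq]
  calc |x i| = Real.sqrt ((x i)^2) := by rw [Real.sqrt_sq_eq_abs]
    _ ≤ _ := by
        apply Real.sqrt_le_sqrt
        have := Finset.single_le_sum (f := fun j => (x j)^2) (fun j _ => sq_nonneg _)
          (Finset.mem_univ i)
        simpa [sq] using this

lemma lattice2_eq_zero {s : E 2} (hs : s ∈ lattice2) (h : ‖s‖ < 1) : s = 0 := by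
  obtain ⟨t, rfl⟩ := mem_lattice2.mp hs
  by_contra hne
  have ht : t ≠ 0 := by rintro rfl; exact hne (by ext i; simp [intVec])
  obtain ⟨i, hi⟩ := Function.ne_iff.mp ht
  have h1 : (1:ℝ) ≤ |(t i : ℝ)| := by
    rw [← Int.cast_abs]; exact_mod_cast Int.one_le_abs hi
  have := abs_coord_le_norm (intVec t) i
  rw [show (intVec t) i = (t i : ℝ) from rfl] at this
  linarith

lemma pr_sub (x y : E 2) : pr x - pr y = pr (x - y) := rfl

lemma dist_pr (x y : E 2) : dist (pr x) (pr y) = ‖pr (x - y)‖ := by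
  rw [dist_eq_norm, pr_sub]

lemma dist_pr_le (x y : E 2) : dist (pr x) (pr y) ≤ ‖x - y‖ := by
  rw [dist_pr]; exact QuotientAddGroup.norm_mk_le_norm

lemma exists_lattice_of_dist_lt {x y : E 2} {r : ℝ} (h : dist (pr x) (pr y) < r) :
    ∃ s ∈ lattice2, ‖x - y + s‖ < r := by
  rw [dist_pr] at h
  obtain ⟨m, hm, hmn⟩ := QuotientAddGroup.norm_lt_iff.mp h
  refine ⟨m - (x - y), ?_, by simpa using hmn⟩
  exact (QuotientAddGroup.eq_iff_sub_mem).mp hm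

lemma norm_lt_of_dist_lt {x y : E 2} {c : ℝ} (hx : ‖x - y‖ + c ≤ 1)
    (h : dist (pr x) (pr y) < c) : ‖x - y‖ < c := by
  obtain ⟨s, hs, hns⟩ := exists_lattice_of_dist_lt h
  have hc : 0 ≤ c := le_of_lt (lt_of_le_of_lt dist_nonneg h)
  have hsn : ‖s‖ < 1 := by
    have h2 := norm_sub_le (x - y + s) (x - y)
    rw [add_sub_cancel_left] at h2
    linarith
  have := lattice2_eq_zero hs hsn
  subst this
  simpa using hns

lemma uniform_lift {F : E 2 → E 2} (hFc : Continuous F) (f : Torus2 ≃ₜ Torus2)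
    (hlift : ∀ x : E 2, pr (F x) = f (pr x)) {δ γ : ℝ} (hγ0 : 0 < γ) (hγ2 : γ < 1/2)
    (hexp : ∀ x y : Torus2, dist x y < δ → dist (f x) (f y) < 1/2 - γ)
    {a b : E 2} (hab : ‖b - a‖ < δ) : ‖F b - F a‖ < 1/2 - γ := by
  have hc0 : 0 < 1/2 - γ := by linarith
  set p : ℝ → E 2 := fun s => a + s • (b - a) with hp
  have hpc : Continuous p := by fun_prop
  have key : ∀ s ∈ Icc (0:ℝ) 1, dist (pr (F (p s))) (pr (F a)) < 1/2 - γ := by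
    intro s hs
    rw [hlift, hlift]
    apply hexp
    apply lt_of_le_of_lt (dist_pr_le _ _)
    have : p s - a = s • (b - a) := by simp [hp]
    rw [this, norm_smul]
    calc ‖s‖ * ‖b - a‖ ≤ 1 * ‖b - a‖ := by
          apply mul_le_mul_of_nonneg_right _ (norm_nonneg _)
          rw [Real.norm_eq_abs, abs_of_nonneg hs.1]; exact hs.2
      _ < δ := by rw [one_mul]; exact hab
  have upgrade : ∀ s ∈ Icc (0:ℝ) 1, ‖F (p s) - F a‖ ≤ 1/2 - γ → ‖F (p s) - F a‖ < 1/2 - γ := by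
    intro s hs hle
    apply norm_lt_of_dist_lt _ (key s hs)
    linarith
  haveI : PreconnectedSpace (Icc (0:ℝ) 1) :=
    Subtype.preconnectedSpace isPreconnected_Icc
  set T : Set (Icc (0:ℝ) 1) := {s | ‖F (p s.1) - F a‖ < 1/2 - γ} with hT
  have hTle : T = {s : Icc (0:ℝ) 1 | ‖F (p s.1) - F a‖ ≤ 1/2 - γ} := by
    ext s
    simp only [hT, mem_setOf_eq]
    exact ⟨fun h => le_of_lt h, fun h => upgrade s.1 s.2 h⟩
  have hcont : Continuous fun s : Icc (0:ℝ) 1 => ‖F (p s.1) - F a‖ := by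
    apply Continuous.norm
    exact ((hFc.comp hpc).comp continuous_subtype_val).sub continuous_const
  have hopen : IsOpen T := isOpen_lt hcont continuous_const
  have hclosed : IsClosed T := by rw [hTle]; exact isClosed_le hcont continuous_const
  have hne : T.Nonempty := by
    refine ⟨⟨0, by constructor <;> norm_num⟩, ?_⟩
    simp only [hT, mem_setOf_eq, hp]
    simp only [zero_smul, add_zero, sub_self, norm_zero]
    linarith
  have huniv : T = univ := (IsClopen.eq_univ ⟨hclosed, hopen⟩ hne)
  have h1 : (⟨1, by constructor <;> norm_num⟩ : Icc (0:ℝ) 1) ∈ T := by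
    rw [huniv]; trivial
  simpa [hT, hp] using h1

lemma iterate_lift {F : E 2 → E 2}
    (hFt : ∀ (x : E 2) (t : Fin 2 → ℤ), F (x + intVec t) = F x + intVec t)
    (n : ℕ) (x : E 2) (t : Fin 2 → ℤ) : F^[n] (x + intVec t) = F^[n] x + intVec t := by
  induction n with
  | zero => simp
  | succ n ih => rw [Function.iterate_succ_apply', Function.iterate_succ_apply', ih, hFt]

lemma shadow_core {F : E 2 → E 2} (hF : IsHomeoLift F)
    (f : Torus2 ≃ₜ Torus2)
    (hlift : ∀ x : E 2, pr (F x) = f (pr x))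
    {δ γ : ℝ} (hδ : δ ∈ Set.Ioo (0 : ℝ) (1 / 2)) (hγ : γ ∈ Set.Ioo (0 : ℝ) (1 / 2))
    (hexp : ∀ x y : Torus2, dist x y < δ → dist (f x) (f y) < 1 / 2 - γ)
    {ε : ℝ} (hε : ε ∈ Set.Ioo 0 γ)
    (hshadow : ∀ ξ : ℕ → Torus2, (∀ n : ℕ, dist (f (ξ n)) (ξ (n + 1)) ≤ ε) →
      ∃ z : Torus2, ∀ n : ℕ, dist ((⇑f)^[n] z) (ξ n) < δ)
    {k : ℕ} (hk : 1 ≤ k) {v : E 2} (hv : v ∈ KsetEps F ε k) :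
    ∃ u ∈ Kset F k, ‖u - v‖ ≤ 2 * δ / k := by
  obtain ⟨ξ, hξ, hξ0, rfl⟩ := hv
  have hFc : Continuous F := hF.1.1
  have hFt := hF.1.2
  -- extend the pseudo-orbit to an infinite pseudo-orbit
  set ξ' : ℕ → E 2 := fun j => F^[j - k] (ξ (min j k)) with hξ'
  have hA : ∀ j ≤ k, ξ' j = ξ j := by
    intro j hj
    simp [hξ', Nat.sub_eq_zero_of_le hj, min_eq_left hj]
  have hB : ∀ n, ‖F (ξ' n) - ξ' (n+1)‖ ≤ ε := by
    intro n
    rcases lt_or_ge n k with h | h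
    · rw [hA n (le_of_lt h), hA (n+1) h]
      exact hξ n h
    · have e1 : ξ' n = F^[n - k] (ξ k) := by simp [hξ', min_eq_right h]
      have e2 : ξ' (n+1) = F^[n + 1 - k] (ξ k) := by
        simp [hξ', min_eq_right (le_trans h (Nat.le_succ n))]
      have e3 : n + 1 - k = (n - k) + 1 := Nat.succ_sub h
      rw [e1, e2, e3, Function.iterate_succ_apply']
      simp only [sub_self, norm_zero]
      exact le_of_lt hε.1
  have hpo : ∀ n, dist (f (pr (ξ' n))) (pr (ξ' (n+1))) ≤ ε := by
    intro n
    rw [← hlift]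
    exact le_trans (dist_pr_le _ _) (hB n)
  obtain ⟨z, hz⟩ := hshadow (fun n => pr (ξ' n)) hpo
  obtain ⟨Z, hZ⟩ := QuotientAddGroup.mk_surjective z
  have hZp : pr Z = z := hZ
  have h0 : dist (pr Z) (pr (ξ 0)) < δ := by
    have := hz 0
    rw [Function.iterate_zero_apply, ← hZp, hA 0 (Nat.zero_le k)] at this
    exact this
  obtain ⟨s, hs, hsn⟩ := exists_lattice_of_dist_lt h0
  set Z' : E 2 := Z + s with hZ'def
  have hZ'z : pr Z' = z := by
    have : pr Z' = pr Z := by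
      apply (QuotientAddGroup.eq_iff_sub_mem).mpr
      simpa [hZ'def] using hs
    rw [this]; exact hZ
  have hZ'0 : ‖Z' - ξ 0‖ < δ := by
    have : Z' - ξ 0 = Z - ξ 0 + s := by rw [hZ'def]; abel
    rw [this]; exact hsn
  have hiter_pr : ∀ n, pr (F^[n] Z') = (⇑f)^[n] z := by
    intro n
    induction n with
    | zero => simpa using hZ'z
    | succ n ih =>
        rw [Function.iterate_succ_apply', Function.iterate_succ_apply', hlift, ih]
  have hind : ∀ n, ‖F^[n] Z' - ξ' n‖ < δ := by
    intro n
    induction n with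
    | zero => simpa [hA 0 (Nat.zero_le k)] using hZ'0
    | succ n ih =>
        have hu : ‖F (F^[n] Z') - F (ξ' n)‖ < 1/2 - γ :=
          uniform_lift hFc f hlift hγ.1 hγ.2 hexp ih
        have hhalf : ‖F^[n+1] Z' - ξ' (n+1)‖ < 1/2 := by
          have tri : ‖F^[n+1] Z' - ξ' (n+1)‖
              ≤ ‖F (F^[n] Z') - F (ξ' n)‖ + ‖F (ξ' n) - ξ' (n+1)‖ := by
            rw [Function.iterate_succ_apply']
            have he : F (F^[n] Z') - ξ' (n+1)
                = (F (F^[n] Z') - F (ξ' n)) + (F (ξ' n) - ξ' (n+1)) := by abel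
            rw [he]; exact norm_add_le _ _
          have := hB n
          have := hε.2
          linarith
        have hd : dist (pr (F^[n+1] Z')) (pr (ξ' (n+1))) < δ := by
          rw [hiter_pr (n+1)]
          exact hz (n+1)
        obtain ⟨s', hs', hsn'⟩ := exists_lattice_of_dist_lt hd
        have hs0 : s' = 0 := by
          apply lattice2_eq_zero hs'
          have h2 := norm_sub_le (F^[n+1] Z' - ξ' (n+1) + s') (F^[n+1] Z' - ξ' (n+1))
          rw [add_sub_cancel_left] at h2
          have := hδ.2
          linarith
        rw [hs0] at hsn'
        simpa using hsn'
  have hkZ : ‖F^[k] Z' - ξ k‖ < δ := by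
    have := hind k
    rwa [hA k le_rfl] at this
  -- translate Z' into the unit cube
  set t' : Fin 2 → ℤ := fun i => -⌊Z' i⌋ with ht'
  set Z'' : E 2 := Z' + intVec t' with hZ''
  have hcube : Z'' ∈ cube 2 := by
    intro i
    have happ : Z'' i = Int.fract (Z' i) := by
      rw [hZ'', PiLp.add_apply]
      show Z' i + ((-⌊Z' i⌋ : ℤ) : ℝ) = _
      rw [Int.fract]
      push_cast
      ring
    rw [happ]
    exact ⟨Int.fract_nonneg _, le_of_lt (Int.fract_lt_one _)⟩
  have hdisp : F^[k] Z'' - Z'' = F^[k] Z' - Z' := by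
    rw [hZ'', iterate_lift hFt]
    abel
  refine ⟨(k : ℝ)⁻¹ • (F^[k] Z'' - Z''), ⟨Z'', hcube, rfl⟩, ?_⟩
  rw [hdisp, ← smul_sub, norm_smul]
  have hk0 : (0:ℝ) < k := by exact_mod_cast hk
  have hdiff : ‖F^[k] Z' - Z' - (ξ k - ξ 0)‖ ≤ 2 * δ := by
    have he : F^[k] Z' - Z' - (ξ k - ξ 0) = (F^[k] Z' - ξ k) + (ξ 0 - Z') := by abel
    rw [he]
    have h1 := norm_add_le (F^[k] Z' - ξ k) (ξ 0 - Z')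
    have h2 : ‖ξ 0 - Z'‖ = ‖Z' - ξ 0‖ := norm_sub_rev _ _
    linarith
  have hinv : ‖(k:ℝ)⁻¹‖ = (k:ℝ)⁻¹ := by
    rw [Real.norm_eq_abs, abs_of_nonneg (le_of_lt (inv_pos.mpr hk0))]
  rw [hinv]
  calc (k:ℝ)⁻¹ * ‖F^[k] Z' - Z' - (ξ k - ξ 0)‖ ≤ (k:ℝ)⁻¹ * (2 * δ) := by
        exact mul_le_mul_of_nonneg_left hdiff (le_of_lt (inv_pos.mpr hk0))
    _ = 2 * δ / k := by ring

/-- If the torus homeomorphism `f` has the δ-shadowing property with constant ε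
(under the stated expansivity bound), then the ε-rotation set of the lift equals
the rotation set. -/
theorem shadowing_epsRotSet_eq_rotSet {F : E 2 → E 2} (hF : IsHomeoLift F)
    (f : Torus2 ≃ₜ Torus2)
    (hlift : ∀ x : E 2, pr (F x) = f (pr x))
    {δ γ : ℝ} (hδ : δ ∈ Set.Ioo (0 : ℝ) (1 / 2)) (hγ : γ ∈ Set.Ioo (0 : ℝ) (1 / 2))
    (hexp : ∀ x y : Torus2, dist x y < δ → dist (f x) (f y) < 1 / 2 - γ)
    {ε : ℝ} (hε : ε ∈ Set.Ioo 0 γ)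
    (hshadow : ∀ ξ : ℕ → Torus2, (∀ n : ℕ, dist (f (ξ n)) (ξ (n + 1)) ≤ ε) →
      ∃ z : Torus2, ∀ n : ℕ, dist ((⇑f)^[n] z) (ξ n) < δ) :
    rotSetEps F ε = rotSet F := by
  apply Set.Subset.antisymm
  · -- rotSetEps ⊆ rotSet
    intro v hv
    simp only [rotSetEps, mem_iInter] at hv
    simp only [rotSet, mem_iInter]
    intro n hn
    rw [Metric.mem_closure_iff]
    intro r hr
    set N : ℕ := max n (⌈4 * δ / r⌉₊ + 1) with hN
    have hN1 : 1 ≤ N := le_max_of_le_right (Nat.le_add_left 1 _)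
    have hNn : n ≤ N := le_max_left _ _
    have hvN := hv N hN1
    rw [Metric.mem_closure_iff] at hvN
    obtain ⟨w, hw, hwv⟩ := hvN (r/2) (by linarith)
    simp only [mem_iUnion] at hw
    obtain ⟨k, hkN, hwk⟩ := hw
    have hk1 : 1 ≤ k := le_trans hN1 hkN
    obtain ⟨u, hu, huw⟩ := shadow_core hF f hlift hδ hγ hexp hε hshadow hk1 hwk
    refine ⟨u, ?_, ?_⟩
    · simp only [mem_iUnion]
      exact ⟨k, le_trans hNn hkN, hu⟩
    · have hk0 : (0:ℝ) < k := by exact_mod_cast hk1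
      have hkbig : 4 * δ / r < (k : ℝ) := by
        have h1 : (⌈4 * δ / r⌉₊ + 1 : ℕ) ≤ k := le_trans (le_max_right _ _) hkN
        have h2 : ((⌈4 * δ / r⌉₊ : ℝ) + 1) ≤ (k : ℝ) := by exact_mod_cast h1
        have h3 : 4 * δ / r ≤ (⌈4 * δ / r⌉₊ : ℝ) := Nat.le_ceil _
        linarith
      have hsmall : 2 * δ / k < r / 2 := by
        rw [div_lt_div_iff₀ hk0 (by norm_num : (0:ℝ) < 2)]
        have h4 : 4 * δ < r * k := by
          rw [div_lt_iff₀ hr] at hkbig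
          linarith
        linarith
      have hdu : dist w u < r / 2 := by
        rw [dist_eq_norm, ← norm_sub_rev]
        exact lt_of_le_of_lt huw hsmall
      calc dist v u ≤ dist v w + dist w u := dist_triangle _ _ _
        _ < r/2 + r/2 := add_lt_add hwv hdu
        _ = r := by ring
  · -- rotSet ⊆ rotSetEps
    have hKsub : ∀ k, Kset F k ⊆ KsetEps F ε k := by
      intro k v hv
      obtain ⟨x, hx, hveq⟩ := hv
      refine ⟨fun j => F^[j] x, ?_, by simpa using hx, hveq⟩
      intro j hj
      show ‖F (F^[j] x) - F^[j+1] x‖ ≤ ε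
      rw [Function.iterate_succ_apply']
      simp only [sub_self, norm_zero]
      exact le_of_lt hε.1
    exact Set.iInter₂_mono fun n hn =>
      closure_mono (Set.iUnion₂_mono fun k hk => hKsub k)
end
end

section
/- Suppose F ∈ H(2) is Lipschitz continuous with Lipschitz constant L > 1, ε > 0, the algorithm data satisfy Lη ≤ R ≤ ε, F satisfies the bounded deviation property with constant c > 0, and there is δ ∈ (0, 1/2) such that every finite 2ε-pseudo-orbit (ξ_j)_{j=0}^n of F is δ-shadowed by an orbit of F (i.e. there exists x ∈ ℝ² with ‖F^j(x) − ξ_j‖ < δ for all 0 ≤ j ≤ n). Then for every n ∈ ℕ with n ≥ 1, d_H(Q_n*, ρ(F)) ≤ (√2 + 1 + c)/n. -/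
open Metric Set Pointwise

noncomputable section

def boxes (B0 : Set (Set (E 2))) : Set (Set (E 2)) :=
  {B' | ∃ B ∈ B0, ∃ t : Fin 2 → ℤ, B' = (fun x => x + intVec t) '' B}

structure AlgoData (ε η R : ℝ) (F : E 2 → E 2) where
  B0 : Set (Set (E 2))
  compact' : ∀ B ∈ B0, IsCompact B
  subCube : ∀ B ∈ B0, B ⊆ cube 2
  small : ∀ B ∈ B0, Metric.diam B ≤ ε
  cover : ⋃₀ B0 = cube 2
  Γ : Set (E 2) → Set (E 2)
  Γ_sub : ∀ B ∈ boxes B0, Γ B ⊆ B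
  Γ_fin : ∀ B ∈ boxes B0, (Γ B).Finite
  Γ_dense : ∀ B ∈ boxes B0, ∀ x ∈ B, ∃ y ∈ Γ B, dist x y ≤ η
  Γ_equiv : ∀ B ∈ boxes B0, ∀ t : Fin 2 → ℤ,
    Γ ((fun x => x + intVec t) '' B) = (fun x => x + intVec t) '' Γ B

variable {ε η R : ℝ} {F : E 2 → E 2}

def boxImage (D : AlgoData ε η R F) (B : Set (E 2)) : Set (Set (E 2)) :=
  {B' | B' ∈ boxes D.B0 ∧ ∃ x ∈ D.Γ B, Metric.infDist (F x) B' ≤ R}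

def boxCol (D : AlgoData ε η R F) : ℕ → Set (Set (E 2))
  | 0 => D.B0
  | k + 1 => {B' | ∃ B ∈ boxCol D k, B' ∈ boxImage D B}

def Qset (D : AlgoData ε η R F) : ℕ → Set (E 2)
  | 0 => cube 2
  | k + 1 => ⋃ B ∈ boxCol D (k + 1), B

def QsetStar (D : AlgoData ε η R F) (n : ℕ) : Set (E 2) :=
  (n : ℝ)⁻¹ • Qset D n


/-! ### Auxiliary lemmas -/

lemma intVec_apply {m : ℕ} (t : Fin m → ℤ) (i : Fin m) : intVec t i = (t i : ℝ) := rfl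

lemma add_intVec_apply {m : ℕ} (x : E m) (t : Fin m → ℤ) (i : Fin m) :
    (x + intVec t) i = x i + (t i : ℝ) := rfl

lemma cube2_nonempty : (cube 2).Nonempty := ⟨0, fun i => by norm_num⟩

lemma norm_le_sqrt_two {x : E 2} (hx : x ∈ cube 2) : ‖x‖ ≤ Real.sqrt 2 := by
  rw [EuclideanSpace.norm_eq]
  apply Real.sqrt_le_sqrt
  have h1 : ∀ i : Fin 2, ‖x i‖ ^ 2 ≤ 1 := by
    intro i
    have h := hx i
    rw [Real.norm_eq_abs, sq_abs]
    nlinarith [h.1, h.2]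
  calc ∑ i : Fin 2, ‖x i‖ ^ 2 ≤ ∑ _i : Fin 2, (1:ℝ) := Finset.sum_le_sum fun i _ => h1 i
    _ = 2 := by simp [Finset.card_fin]

lemma exists_reduce (z : E 2) : ∃ t : Fin 2 → ℤ, z + intVec t ∈ cube 2 := by
  refine ⟨fun i => -⌊z i⌋, fun i => ?_⟩
  rw [add_intVec_apply]
  push_cast
  constructor
  · linarith [Int.floor_le (z i)]
  · linarith [Int.lt_floor_add_one (z i)]

lemma lift_iterate {F : E 2 → E 2} (hF : IsLift F) (k : ℕ) (x : E 2) (t : Fin 2 → ℤ) :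
    F^[k] (x + intVec t) = F^[k] x + intVec t := by
  induction k with
  | zero => simp
  | succ k ih => rw [Function.iterate_succ_apply', ih, hF.2, Function.iterate_succ_apply']

lemma cube2_isCompact : IsCompact (cube 2) := by
  apply isCompact_of_isClosed_isBounded
  · have h1 : cube 2 = ⋂ i : Fin 2, (fun x : E 2 => x i) ⁻¹' Set.Icc (0:ℝ) 1 := by
      ext x; simp [cube]
    rw [h1]
    exact isClosed_iInter fun i => IsClosed.preimage (by fun_prop) isClosed_Icc
  · apply Metric.isBounded_iff_subset_closedBall (0 : E 2) |>.2
    exact ⟨Real.sqrt 2, fun x hx => by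
      simpa [Metric.mem_closedBall, dist_zero_right] using norm_le_sqrt_two hx⟩

lemma exists_displacement_bound {F : E 2 → E 2} (hF : IsLift F) :
    ∃ M : ℝ, 0 ≤ M ∧ ∀ z : E 2, ‖F z - z‖ ≤ M := by
  obtain ⟨z₀, hz₀, hmax⟩ := cube2_isCompact.exists_isMaxOn cube2_nonempty
    (f := fun z => ‖F z - z‖) ((hF.1.sub continuous_id).norm.continuousOn)
  refine ⟨‖F z₀ - z₀‖, norm_nonneg _, fun z => ?_⟩
  obtain ⟨t, ht⟩ := exists_reduce z
  have h1 : F (z + intVec t) - (z + intVec t) = F z - z := by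
    rw [hF.2]; abel
  have h2 := hmax ht
  simpa [h1] using h2

lemma Kset_eq_image {F : E 2 → E 2} (k : ℕ) :
    Kset F k = (fun x => (k:ℝ)⁻¹ • (F^[k] x - x)) '' (cube 2) := by
  ext v; simp [Kset, Set.mem_image, eq_comm]

lemma Kset_isCompact {F : E 2 → E 2} (hF : IsLift F) (k : ℕ) : IsCompact (Kset F k) := by
  rw [Kset_eq_image]
  exact cube2_isCompact.image (by have h := hF.1.iterate k; fun_prop)

lemma Kset_nonempty {F : E 2 → E 2} (k : ℕ) : (Kset F k).Nonempty := by
  obtain ⟨x, hx⟩ := cube2_nonempty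
  exact ⟨_, x, hx, rfl⟩

lemma iterate_displacement_bound {F : E 2 → E 2} {M : ℝ} (hM : ∀ z : E 2, ‖F z - z‖ ≤ M)
    (k : ℕ) (x : E 2) : ‖F^[k] x - x‖ ≤ k * M := by
  induction k with
  | zero => simp
  | succ k ih =>
    have h1 : F^[k+1] x - x = (F (F^[k] x) - F^[k] x) + (F^[k] x - x) := by
      rw [Function.iterate_succ_apply']; abel
    rw [h1]
    calc ‖_ + _‖ ≤ ‖F (F^[k] x) - F^[k] x‖ + ‖F^[k] x - x‖ := norm_add_le _ _
      _ ≤ M + k * M := add_le_add (hM _) ih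
      _ = (k+1 : ℕ) * M := by push_cast; ring

lemma rotSet_subset_closedBall {F : E 2 → E 2} {M : ℝ} (hM0 : 0 ≤ M)
    (hM : ∀ z : E 2, ‖F z - z‖ ≤ M) :
    rotSet F ⊆ Metric.closedBall 0 M := by
  have hK : ∀ k : ℕ, Kset F k ⊆ Metric.closedBall 0 M := by
    rintro k v ⟨x, _, rfl⟩
    rw [Metric.mem_closedBall, dist_zero_right, norm_smul, Real.norm_eq_abs]
    rcases Nat.eq_zero_or_pos k with hk | hk
    · simp [hk, hM0]
    · have hkR : (0:ℝ) < k := by exact_mod_cast hk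
      calc |(k:ℝ)⁻¹| * ‖F^[k] x - x‖ ≤ (k:ℝ)⁻¹ * (k * M) := by
            rw [abs_of_nonneg (by positivity)]
            exact mul_le_mul_of_nonneg_left (iterate_displacement_bound hM k x) (by positivity)
        _ = M := by field_simp
  intro v hv
  have h1 : v ∈ closure (⋃ k ≥ 1, Kset F k) := by
    have := Set.mem_iInter.1 hv 1
    simpa using this
  refine closure_minimal ?_ Metric.isClosed_closedBall h1
  exact Set.iUnion₂_subset fun k _ => hK k

lemma B0_subset_boxes (D : AlgoData ε η R F) : D.B0 ⊆ boxes D.B0 := by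
  intro B hB
  refine ⟨B, hB, 0, ?_⟩
  have h1 : intVec (0 : Fin 2 → ℤ) = (0 : E 2) := by ext i; simp [intVec]
  simp [h1]

lemma boxCol_subset_boxes (D : AlgoData ε η R F) : ∀ k, boxCol D k ⊆ boxes D.B0
  | 0 => B0_subset_boxes D
  | k + 1 => fun B' hB' => by
      obtain ⟨B, _, hB'2, _⟩ := hB'
      exact hB'2

lemma boxes_isCompact (D : AlgoData ε η R F) {B : Set (E 2)} (hB : B ∈ boxes D.B0) :
    IsCompact B := by
  obtain ⟨B₀, hB₀, t, rfl⟩ := hB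
  exact (D.compact' B₀ hB₀).image (continuous_id.add continuous_const)

lemma boxes_diam (D : AlgoData ε η R F) {B : Set (E 2)} (hB : B ∈ boxes D.B0) :
    Metric.diam B ≤ ε := by
  obtain ⟨B₀, hB₀, t, rfl⟩ := hB
  rw [(isometry_add_right (intVec t)).diam_image]
  exact D.small B₀ hB₀

lemma exists_box_mem (D : AlgoData ε η R F) (z : E 2) : ∃ B ∈ boxes D.B0, z ∈ B := by
  obtain ⟨s, hs⟩ := exists_reduce z
  have h1 : z + intVec s ∈ ⋃₀ D.B0 := D.cover ▸ hs
  obtain ⟨B₀, hB₀, hz⟩ := h1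
  refine ⟨(fun x => x + intVec (-s)) '' B₀, ⟨B₀, hB₀, -s, rfl⟩, ⟨z + intVec s, hz, ?_⟩⟩
  have h2 : intVec (-s) = -intVec s := by ext i; simp [intVec]
  rw [h2]; module

lemma chain_pseudo (D : AlgoData ε η R F) (hRε : R ≤ ε) :
    ∀ k, ∀ B ∈ boxCol D k, ∀ y ∈ B,
      ∃ ξ : ℕ → E 2, ξ 0 ∈ cube 2 ∧ IsPseudoOrbit F (2 * ε) k ξ ∧ ξ k = y := by
  intro k
  induction k with
  | zero =>
    intro B hB y hy
    exact ⟨fun _ => y, D.subCube B hB hy, fun j hj => absurd hj (Nat.not_lt_zero j), rfl⟩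
  | succ k ih =>
    intro B' hB' y hy
    obtain ⟨B, hB, hB'boxes, x, hxΓ, hxR⟩ := hB'
    have hxB : x ∈ B := D.Γ_sub B (boxCol_subset_boxes D k hB) hxΓ
    obtain ⟨ξ, hξ0, hξpo, hξk⟩ := ih B hB x hxB
    obtain ⟨z, hzB', hz⟩ := (boxes_isCompact D hB'boxes).exists_infDist_eq_dist ⟨y, hy⟩ (F x)
    have hstep : ‖F x - y‖ ≤ 2 * ε := by
      have h1 : dist (F x) z ≤ R := hz ▸ hxR
      have h2 : dist z y ≤ ε :=
        le_trans (Metric.dist_le_diam_of_mem (boxes_isCompact D hB'boxes).isBounded hzB' hy)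
          (boxes_diam D hB'boxes)
      calc ‖F x - y‖ = dist (F x) y := (dist_eq_norm _ _).symm
        _ ≤ dist (F x) z + dist z y := dist_triangle _ _ _
        _ ≤ R + ε := add_le_add h1 h2
        _ ≤ 2 * ε := by linarith
    refine ⟨Function.update ξ (k + 1) y, ?_, ?_, ?_⟩
    · rwa [Function.update_of_ne (by omega)]
    · intro j hj
      rcases Nat.lt_or_ge j k with hjk | hjk
      · rw [Function.update_of_ne (by omega), Function.update_of_ne (by omega)]
        exact hξpo j hjk
      · have hjeq : j = k := by omega
        subst hjeq
        rw [Function.update_of_ne (by omega), Function.update_self, hξk]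
        exact hstep
    · rw [Function.update_self]

lemma track (D : AlgoData ε η R F) {L : NNReal} (hL : LipschitzWith L F)
    (hLη : (L : ℝ) * η ≤ R) (x : E 2) (hx : x ∈ cube 2) :
    ∀ k, ∃ B ∈ boxCol D k, F^[k] x ∈ B := by
  intro k
  induction k with
  | zero =>
    have h1 : x ∈ ⋃₀ D.B0 := D.cover ▸ hx
    obtain ⟨B, hB, hxB⟩ := h1
    exact ⟨B, hB, hxB⟩
  | succ k ih =>
    obtain ⟨B, hB, hxB⟩ := ih
    have hBbox : B ∈ boxes D.B0 := boxCol_subset_boxes D k hB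
    obtain ⟨γ, hγΓ, hγd⟩ := D.Γ_dense B hBbox (F^[k] x) hxB
    obtain ⟨B'', hB''box, hmem⟩ := exists_box_mem D (F^[k+1] x)
    refine ⟨B'', ⟨B, hB, hB''box, γ, hγΓ, ?_⟩, hmem⟩
    have h1 : dist (F γ) (F^[k+1] x) ≤ (L : ℝ) * η := by
      rw [Function.iterate_succ_apply']
      calc dist (F γ) (F (F^[k] x)) ≤ (L:ℝ) * dist γ (F^[k] x) := hL.dist_le_mul _ _
        _ ≤ (L:ℝ) * η := by
            have hd : dist γ (F^[k] x) ≤ η := by rw [dist_comm]; exact hγd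
            exact mul_le_mul_of_nonneg_left hd (by positivity)
    exact le_trans (Metric.infDist_le_dist_of_mem hmem) (h1.trans hLη)

/-- Improved error estimate under shadowing: `d_H(Q_n*, ρ(F)) ≤ (√2 + 1 + c)/n`. -/
theorem hausdorffDist_QsetStar_rotSet_shadowing {F : E 2 → E 2} (hF : IsHomeoLift F)
    {L : NNReal} (hL : LipschitzWith L F) (hL1 : 1 < L)
    {ε η R : ℝ} (hε : 0 < ε) (hη : 0 < η) (hR : 0 < R)
    (hLη : (L : ℝ) * η ≤ R) (hRε : R ≤ ε)
    (D : AlgoData ε η R F)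
    {c : ℝ} (hc : 0 < c)
    (hBD : ∀ n : ℕ, 1 ≤ n → Metric.hausdorffDist (Kset F n) (rotSet F) ≤ c / n)
    {δ : ℝ} (hδ : δ ∈ Set.Ioo (0 : ℝ) (1 / 2))
    (hshadow : ∀ (n : ℕ) (ξ : ℕ → E 2), IsPseudoOrbit F (2 * ε) n ξ →
      ∃ x : E 2, ∀ j ≤ n, ‖F^[j] x - ξ j‖ < δ)
    {n : ℕ} (hn : 1 ≤ n) :
    Metric.hausdorffDist (QsetStar D n) (rotSet F) ≤
      (Real.sqrt 2 + 1 + c) / n := by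
  obtain ⟨hδ0, hδhalf⟩ := hδ
  have hn0 : (0:ℝ) < n := by exact_mod_cast hn
  have hs2 : (0:ℝ) ≤ Real.sqrt 2 := Real.sqrt_nonneg 2
  have hr0 : 0 ≤ (Real.sqrt 2 + 1 + c) / n := by positivity
  rcases Set.eq_empty_or_nonempty (rotSet F) with hρe | hρne
  · rw [hρe, Metric.hausdorffDist_empty]
    exact hr0
  obtain ⟨M, hM0, hM⟩ := exists_displacement_bound hF.1
  have hρb : Bornology.IsBounded (rotSet F) :=
    Metric.isBounded_closedBall.subset (rotSet_subset_closedBall hM0 hM)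
  have hKfin : EMetric.hausdorffEdist (Kset F n) (rotSet F) ≠ ⊤ :=
    Metric.hausdorffEdist_ne_top_of_nonempty_of_bounded (Kset_nonempty n) hρne
      (Kset_isCompact hF.1 n).isBounded hρb
  have hBDn : Metric.hausdorffDist (Kset F n) (rotSet F) ≤ c / n := hBD n hn
  obtain ⟨m, rfl⟩ : ∃ m, n = m + 1 := ⟨n - 1, by omega⟩
  set N := m + 1 with hN
  apply Metric.hausdorffDist_le_of_infDist hr0
  · -- every point of Q_n* is close to the rotation set
    rintro v hv
    obtain ⟨y, hy, rfl⟩ := hv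
    have hyQ : ∃ B ∈ boxCol D N, y ∈ B := by
      have : y ∈ ⋃ B ∈ boxCol D N, B := hy
      simpa using this
    obtain ⟨B, hB, hyB⟩ := hyQ
    obtain ⟨ξ, hξ0, hξpo, hξN⟩ := chain_pseudo D hRε N B hB y hyB
    obtain ⟨x, hx⟩ := hshadow N ξ hξpo
    have hx0 : ‖x - ξ 0‖ < δ := by simpa using hx 0 (Nat.zero_le N)
    have hxN : ‖F^[N] x - y‖ < δ := by
      have := hx N le_rfl
      rwa [hξN] at this
    obtain ⟨t, ht⟩ := exists_reduce x
    have hdisp : F^[N] (x + intVec t) - (x + intVec t) = F^[N] x - x := by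
      rw [lift_iterate hF.1]; abel
    have hv0 : (N:ℝ)⁻¹ • (F^[N] x - x) ∈ Kset F N := ⟨x + intVec t, ht, by rw [hdisp]⟩
    have h1 : Metric.infDist ((N:ℝ)⁻¹ • (F^[N] x - x)) (rotSet F) ≤ c / N :=
      le_trans (Metric.infDist_le_hausdorffDist_of_mem hv0 hKfin) hBDn
    have h2 : dist ((N:ℝ)⁻¹ • y) ((N:ℝ)⁻¹ • (F^[N] x - x)) ≤ (Real.sqrt 2 + 1) / N := by
      rw [dist_smul₀, dist_eq_norm]
      have hyu : ‖y - (F^[N] x - x)‖ ≤ Real.sqrt 2 + 1 := by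
        have e1 : y - (F^[N] x - x) = (y - F^[N] x) + x := by abel
        have e2 : ‖x‖ ≤ δ + Real.sqrt 2 := by
          calc ‖x‖ = ‖(x - ξ 0) + ξ 0‖ := by rw [sub_add_cancel]
            _ ≤ ‖x - ξ 0‖ + ‖ξ 0‖ := norm_add_le _ _
            _ ≤ δ + Real.sqrt 2 := add_le_add hx0.le (norm_le_sqrt_two hξ0)
        calc ‖y - (F^[N] x - x)‖ = ‖(y - F^[N] x) + x‖ := by rw [e1]
          _ ≤ ‖y - F^[N] x‖ + ‖x‖ := norm_add_le _ _
          _ ≤ δ + (δ + Real.sqrt 2) := by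
              refine add_le_add ?_ e2
              rw [norm_sub_rev]; exact hxN.le
          _ ≤ Real.sqrt 2 + 1 := by linarith
      have hNpos : (0:ℝ) < N := hn0
      calc ‖(N:ℝ)⁻¹‖ * ‖y - (F^[N] x - x)‖
          = (N:ℝ)⁻¹ * ‖y - (F^[N] x - x)‖ := by
            rw [Real.norm_eq_abs, abs_of_nonneg (by positivity)]
        _ ≤ (N:ℝ)⁻¹ * (Real.sqrt 2 + 1) :=
            mul_le_mul_of_nonneg_left hyu (by positivity)
        _ = (Real.sqrt 2 + 1) / N := by ring
    calc Metric.infDist ((N:ℝ)⁻¹ • y) (rotSet F)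
        ≤ Metric.infDist ((N:ℝ)⁻¹ • (F^[N] x - x)) (rotSet F)
            + dist ((N:ℝ)⁻¹ • y) ((N:ℝ)⁻¹ • (F^[N] x - x)) :=
          Metric.infDist_le_infDist_add_dist
      _ ≤ c / N + (Real.sqrt 2 + 1) / N := add_le_add h1 h2
      _ = (Real.sqrt 2 + 1 + c) / N := by ring
  · -- every point of the rotation set is close to Q_n*
    intro v hv
    have hKfin' : EMetric.hausdorffEdist (rotSet F) (Kset F N) ≠ ⊤ := by
      show Metric.hausdorffEDist _ _ ≠ ⊤; rw [Metric.hausdorffEDist_comm]; exact hKfin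
    have h1 : Metric.infDist v (Kset F N) ≤ c / N := by
      calc Metric.infDist v (Kset F N)
          ≤ Metric.hausdorffDist (rotSet F) (Kset F N) :=
            Metric.infDist_le_hausdorffDist_of_mem hv hKfin'
        _ = Metric.hausdorffDist (Kset F N) (rotSet F) := Metric.hausdorffDist_comm
        _ ≤ c / N := hBDn
    obtain ⟨w, hw, hweq⟩ :=
      (Kset_isCompact hF.1 N).exists_infDist_eq_dist (Kset_nonempty N) v
    obtain ⟨x, hxcube, rfl⟩ := hw
    obtain ⟨B, hB, hFx⟩ := track D hL hLη x hxcube N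
    have hq : (N:ℝ)⁻¹ • F^[N] x ∈ QsetStar D N := by
      apply Set.smul_mem_smul_set
      show F^[N] x ∈ Qset D (m + 1)
      simp only [Qset]
      exact Set.mem_biUnion hB hFx
    have h2 : dist ((N:ℝ)⁻¹ • (F^[N] x - x)) ((N:ℝ)⁻¹ • F^[N] x) ≤ Real.sqrt 2 / N := by
      rw [dist_smul₀, dist_eq_norm]
      have e1 : F^[N] x - x - F^[N] x = -x := by abel
      rw [e1, norm_neg, Real.norm_eq_abs, abs_of_nonneg (by positivity)]
      calc (N:ℝ)⁻¹ * ‖x‖ ≤ (N:ℝ)⁻¹ * Real.sqrt 2 :=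
            mul_le_mul_of_nonneg_left (norm_le_sqrt_two hxcube) (by positivity)
        _ = Real.sqrt 2 / N := by ring
    calc Metric.infDist v (QsetStar D N)
        ≤ dist v ((N:ℝ)⁻¹ • F^[N] x) := Metric.infDist_le_dist_of_mem hq
      _ ≤ dist v ((N:ℝ)⁻¹ • (F^[N] x - x))
            + dist ((N:ℝ)⁻¹ • (F^[N] x - x)) ((N:ℝ)⁻¹ • F^[N] x) := dist_triangle _ _ _
      _ ≤ c / N + Real.sqrt 2 / N := add_le_add (hweq ▸ h1) h2
      _ ≤ (Real.sqrt 2 + 1 + c) / N := by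
          rw [← add_div, div_le_div_iff₀ hn0 hn0]
          nlinarith [hn0]
end
end
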